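/- Let G be a finite group whose commutator subgroup G′ is 2-nilpotent (i.e. G′ has a normal 2-complement). Then the real core R(G), the subgroup generated by all real elements of odd order, has odd order. -/

import Mathlib

open scoped commutatorElement

private lemma odd_of_dvd {a b : ℕ} (hb : Odd b) (h : a ∣ b) : Odd a := by
  rcases Nat.even_or_odd a with he | ho
  · exact absurd (even_iff_two_dvd.2 ((even_iff_two_dvd.1 he).trans h))
      (Nat.not_even_iff_odd.2 hb)
  · exact ho

/-- If the commutator subgroup of a finite group `G` is 2-nilpotent (has a normal
2-complement), then the real core of `G` — the subgroup generated by all real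
elements of odd order — has odd order. -/
theorem real_core_odd_of_commutator_two_nilpotent {G : Type*} [Group G] [Finite G]
    (h2nilp : ∃ N : Subgroup ↥(commutator G), N.Normal ∧ Odd (Nat.card N) ∧
      ∃ k : ℕ, N.index = 2 ^ k) :
    Odd (Nat.card
      (Subgroup.closure {x : G | Odd (orderOf x) ∧ ∃ g : G, g⁻¹ * x * g = x⁻¹})) := by
  obtain ⟨N, hN, hodd, k, hk⟩ := h2nilp
  have key : Subgroup.closure {x : G | Odd (orderOf x) ∧ ∃ g : G, g⁻¹ * x * g = x⁻¹}
      ≤ N.map (commutator G).subtype := by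
    apply Subgroup.closure_le _ |>.2
    rintro x ⟨hxodd, g, hg⟩
    -- x² is a commutator
    have hsq : x * x = ⁅x, g⁻¹⁆ := by
      have h' : g⁻¹ * x⁻¹ * g = x := by
        have := congrArg (·⁻¹) hg
        simpa [mul_assoc] using this.symm.symm
      simp only [commutatorElement_def, inv_inv]
      rw [mul_assoc, mul_assoc, ← mul_assoc g⁻¹ x⁻¹ g, h']
    have hsqmem : x * x ∈ commutator G := by
      rw [hsq, commutator_def]
      exact Subgroup.commutator_mem_commutator (Subgroup.mem_top x) (Subgroup.mem_top g⁻¹)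
    obtain ⟨m, hm⟩ := hxodd
    have hxmem : x ∈ commutator G := by
      have hpow : (x * x) ^ (m + 1) = x := by
        rw [← sq, ← pow_mul]
        have h2 : x ^ (2 * (m + 1)) = x ^ (orderOf x) * x := by
          rw [hm, ← pow_succ]; ring_nf
        rw [h2, pow_orderOf_eq_one, one_mul]
      rw [← hpow]
      exact pow_mem hsqmem _
    set x' : ↥(commutator G) := ⟨x, hxmem⟩ with hx'
    have horder : orderOf x' = orderOf x :=
      (orderOf_injective (commutator G).subtype (commutator G).subtype_injective x').symm
    have hmem : x' ∈ N := by
      rw [← QuotientGroup.eq_one_iff]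
      have h1 : orderOf ((QuotientGroup.mk x' : ↥(commutator G) ⧸ N)) ∣ orderOf x' :=
        orderOf_map_dvd (QuotientGroup.mk' N) x'
      have h2 : orderOf ((QuotientGroup.mk x' : ↥(commutator G) ⧸ N)) ∣ 2 ^ k := by
        rw [← hk, Subgroup.index]
        exact orderOf_dvd_natCard _
      have hoddord : Odd (orderOf ((QuotientGroup.mk x' : ↥(commutator G) ⧸ N))) := by
        apply odd_of_dvd _ h1
        rw [horder]
        exact ⟨m, hm⟩
      obtain ⟨j, hj, hje⟩ := (Nat.dvd_prime_pow Nat.prime_two).1 h2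
      have hj0 : j = 0 := by
        by_contra hne
        have : 2 ∣ orderOf ((QuotientGroup.mk x' : ↥(commutator G) ⧸ N)) := by
          rw [hje]
          exact dvd_pow_self 2 hne
        exact (Nat.not_even_iff_odd.2 hoddord) (even_iff_two_dvd.2 this)
      rw [hj0, pow_zero] at hje
      exact orderOf_eq_one_iff.1 hje
    exact ⟨x', hmem, rfl⟩
  have hcard : Nat.card (N.map (commutator G).subtype) = Nat.card N :=
    (Nat.card_congr (Subgroup.equivMapOfInjective N _
      (commutator G).subtype_injective).toEquiv).symm
  exact odd_of_dvd (hcard ▸ hodd) (Subgroup.card_dvd_of_le key)
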